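/- arXiv:2108.03716 — 3 statements merged into one kernel-verified Lean document; each statement's English description precedes it below -/
import Mathlib

section
/- For every complex number s with Re(s) > 1, the series ∑_{n=0}^∞ (1/2^{n+1}) · ∑_{k=0}^{n} binom(n,k) · (k+1)^{-s} converges and its sum equals ζ(s), the Riemann zeta function. -/
/-- **Euler series transformation for the Riemann zeta function.**
For every complex `s` with `Re s > 1`, the series
`∑_{n=0}^∞ (1/2^{n+1}) · ∑_{k=0}^n C(n,k) · (k+1)^{-s}` converges with sum `ζ(s)`. -/
theorem euler_transform_hasSum_riemannZeta (s : ℂ) (hs : 1 < s.re) :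
    HasSum (fun n : ℕ =>
      (1 / 2 ^ (n + 1) : ℂ) *
        ∑ k ∈ Finset.range (n + 1), (n.choose k : ℂ) * ((k + 1 : ℕ) : ℂ) ^ (-s))
      (riemannZeta s) := by
  set a : ℕ → ℂ := fun k => ((k + 1 : ℕ) : ℂ) ^ (-s) with ha
  have key : ∀ k : ℕ, a k = 1 / ((k : ℂ) + 1) ^ s := by
    intro k
    rw [ha]
    push_cast
    rw [Complex.cpow_neg, one_div]
  -- summability of `a` and identification of its sum with ζ(s)
  have hsummable : Summable a := by
    have := (Complex.summable_one_div_nat_cpow.mpr hs).comp_injective Nat.succ_injective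
    refine this.congr fun k => ?_
    simp [key k, Nat.succ_eq_add_one]
  have hζ : HasSum a (riemannZeta s) := by
    convert hsummable.hasSum
    rw [zeta_eq_tsum_one_div_nat_add_one_cpow hs]
    exact tsum_congr fun k => (key k).symm
  have hhalfC : ‖(1/2 : ℂ)‖ < 1 := by norm_num
  have hhalfR : ‖(1/2 : ℝ)‖ < 1 := by norm_num
  -- the double series, indexed so that no `if` is needed
  set g : ℕ × ℕ → ℂ := fun p => (1/2 : ℂ) ^ (p.2 + p.1 + 1) * ((p.2 + p.1).choose p.1 : ℂ) * a p.1
    with hg_def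
  have hfib : ∀ k : ℕ, HasSum (fun m : ℕ => g (k, m)) (a k) := by
    intro k
    have h := hasSum_choose_mul_geometric_of_norm_lt_one (𝕜 := ℂ) k hhalfC
    have h2 := (h.mul_right (a k)).mul_left ((1/2 : ℂ) ^ (k + 1))
    have e : (1/2 : ℂ) ^ (k + 1) * (1 / (1 - 1/2) ^ (k + 1) * a k) = a k := by
      norm_num
    rw [e] at h2
    refine h2.congr_fun fun m => ?_
    simp only [hg_def]
    rw [show m + k + 1 = k + 1 + m by ring, pow_add]
    ring
  -- summability of the double series, via norms
  have hnorm : ∀ p : ℕ × ℕ,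
      ‖g p‖ = (1/2 : ℝ) ^ (p.2 + p.1 + 1) * ((p.2 + p.1).choose p.1 : ℝ) * ‖a p.1‖ := by
    intro p
    simp [hg_def, norm_mul, abs_of_nonneg]
  have hfibR : ∀ k : ℕ, HasSum (fun m : ℕ => ‖g (k, m)‖) (‖a k‖) := by
    intro k
    have h := hasSum_choose_mul_geometric_of_norm_lt_one (𝕜 := ℝ) k hhalfR
    have h2 := (h.mul_right (‖a k‖)).mul_left ((1/2 : ℝ) ^ (k + 1))
    have e : (1/2 : ℝ) ^ (k + 1) * (1 / (1 - 1/2) ^ (k + 1) * ‖a k‖) = ‖a k‖ := by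
      norm_num
    rw [e] at h2
    refine h2.congr_fun fun m => ?_
    rw [hnorm, show m + k + 1 = k + 1 + m by ring, pow_add]
    ring
  have hgsum : Summable g := by
    rw [← summable_norm_iff]
    refine (summable_prod_of_nonneg fun p => norm_nonneg _).mpr ⟨fun k => (hfibR k).summable, ?_⟩
    refine (hsummable.norm.congr fun k => ?_)
    exact ((hfibR k).tsum_eq).symm
  -- the double series sums to ζ(s)
  have hgζ : HasSum g (riemannZeta s) := by
    have h1 := hgsum.hasSum
    have h2 : HasSum a (∑' p, g p) := h1.prod_fiberwise hfib
    rwa [h2.unique hζ] at h1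
  -- reindex via the injection (k, m) ↦ (m + k, k)
  set h : ℕ × ℕ → ℂ := fun p =>
    if p.2 ≤ p.1 then (1/2 : ℂ) ^ (p.1 + 1) * (p.1.choose p.2 : ℂ) * a p.2 else 0 with hh_def
  have hi : Function.Injective (fun p : ℕ × ℕ => (p.2 + p.1, p.1)) := by
    intro p q hpq
    simp only [Prod.mk.injEq] at hpq
    obtain ⟨h1, h2⟩ := hpq
    exact Prod.ext h2 (by omega)
  have hcomp : ∀ p : ℕ × ℕ, h (p.2 + p.1, p.1) = g p := by
    intro p
    simp [hh_def, hg_def, Nat.le_add_left]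
  have hzero : ∀ p : ℕ × ℕ, p ∉ Set.range (fun q : ℕ × ℕ => (q.2 + q.1, q.1)) → h p = 0 := by
    intro p hp
    rw [hh_def]
    simp only [ite_eq_right_iff]
    intro hle
    refine absurd ⟨(p.2, p.1 - p.2), ?_⟩ hp
    show (p.1 - p.2 + p.2, p.2) = p
    rw [Nat.sub_add_cancel hle]
  have hhζ : HasSum h (riemannZeta s) := by
    rw [← Function.Injective.hasSum_iff hi hzero]
    exact hgζ.congr_fun fun p => hcomp p
  -- compute the fibers of `h` over the first coordinate
  have hfin : ∀ n : ℕ, HasSum (fun k : ℕ => h (n, k))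
      ((1 / 2 ^ (n + 1) : ℂ) * ∑ k ∈ Finset.range (n + 1), (n.choose k : ℂ) * a k) := by
    intro n
    have : ∀ k ∉ Finset.range (n + 1), h (n, k) = 0 := by
      intro k hk
      simp only [Finset.mem_range] at hk
      simp [hh_def, show ¬ k ≤ n by omega]
    have hsum := hasSum_sum_of_ne_finset_zero (L := SummationFilter.unconditional ℕ) this
    convert hsum using 1
    rw [Finset.mul_sum]
    refine Finset.sum_congr rfl fun k hk => ?_
    simp only [Finset.mem_range] at hk
    rw [hh_def]
    simp only [show k ≤ n by omega, if_true]
    rw [div_pow, one_pow]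
    ring
  exact hhζ.prod_fiberwise hfin
end

section
/- Let N ≥ 1 be a natural number and define ζ_N(s) := ∑_{n=1}^{N} (1/2)·(n^{−s} + χ(s)·n^{s−1}). If s is a complex number that is not an integer and ζ_N(s) = 0, then ζ_N(1 − conj(s)) = 0. In particular, the zeros of ζ_N in the critical strip are symmetric with respect to the critical line Re(s) = 1/2. -/
open Real

/-- `χ(s) = 2^s · π^(s-1) · sin(πs/2) · Γ(1-s)`, the factor in the functional
equation `ζ(s) = χ(s)·ζ(1-s)`. -/
noncomputable def chi (s : ℂ) : ℂ :=
  (2 : ℂ) ^ s * (π : ℂ) ^ (s - 1) * Complex.sin (π * s / 2) * Complex.Gamma (1 - s)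

/-- The `N`-th section `ζ_N(s) = ∑_{n=1}^N (1/2)(n^{-s} + χ(s)·n^{s-1})` of the
approximate functional equation. -/
noncomputable def zetaSection (N : ℕ) (s : ℂ) : ℂ :=
  ∑ n ∈ Finset.Icc 1 N, (1 / 2 : ℂ) * ((n : ℂ) ^ (-s) + chi s * (n : ℂ) ^ (s - 1))

private lemma arg_ne_pi_of_nonneg {x : ℝ} (hx : 0 ≤ x) : (x : ℂ).arg ≠ π := by
  rcases eq_or_lt_of_le hx with h | h
  · simp [← h, Real.pi_ne_zero.symm]
  · rw [Complex.arg_ofReal_of_nonneg hx]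
    exact Real.pi_ne_zero.symm

private lemma cpow_real_conj {x : ℝ} (hx : 0 ≤ x) (w : ℂ) :
    (x : ℂ) ^ ((starRingEnd ℂ) w) = (starRingEnd ℂ) ((x : ℂ) ^ w) := by
  rw [Complex.cpow_conj _ _ (arg_ne_pi_of_nonneg hx), Complex.conj_ofReal]

private lemma chi_conj (s : ℂ) : chi ((starRingEnd ℂ) s) = (starRingEnd ℂ) (chi s) := by
  unfold chi
  have e1 : (2 : ℂ) ^ ((starRingEnd ℂ) s) = (starRingEnd ℂ) ((2 : ℂ) ^ s) := by
    rw [show ((2 : ℂ)) = ((2 : ℝ) : ℂ) by norm_num, cpow_real_conj (by norm_num)]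
  have e2 : (π : ℂ) ^ ((starRingEnd ℂ) s - 1) = (starRingEnd ℂ) ((π : ℂ) ^ (s - 1)) := by
    rw [show ((starRingEnd ℂ) s - 1) = (starRingEnd ℂ) (s - 1) by simp,
      cpow_real_conj Real.pi_pos.le]
  have e3 : Complex.sin (π * (starRingEnd ℂ) s / 2) =
      (starRingEnd ℂ) (Complex.sin (π * s / 2)) := by
    rw [← Complex.sin_conj]
    congr 1
    rw [map_div₀, map_mul, Complex.conj_ofReal, map_ofNat]
  have e4 : Complex.Gamma (1 - (starRingEnd ℂ) s) =
      (starRingEnd ℂ) (Complex.Gamma (1 - s)) := by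
    rw [show (1 - (starRingEnd ℂ) s) = (starRingEnd ℂ) (1 - s) by simp, Complex.Gamma_conj]
  rw [e1, e2, e3, e4, ← map_mul, ← map_mul, ← map_mul]

private lemma zetaSection_conj (N : ℕ) (s : ℂ) :
    zetaSection N ((starRingEnd ℂ) s) = (starRingEnd ℂ) (zetaSection N s) := by
  unfold zetaSection
  rw [map_sum]
  refine Finset.sum_congr rfl fun n hn => ?_
  have hn' : ((n : ℂ)) = ((n : ℝ) : ℂ) := by push_cast; rfl
  have h1 : ((n : ℂ)) ^ (-(starRingEnd ℂ) s) = (starRingEnd ℂ) ((n : ℂ) ^ (-s)) := by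
    rw [show (-(starRingEnd ℂ) s) = (starRingEnd ℂ) (-s) by simp, hn',
      cpow_real_conj (Nat.cast_nonneg n)]
  have h2 : ((n : ℂ)) ^ ((starRingEnd ℂ) s - 1) = (starRingEnd ℂ) ((n : ℂ) ^ (s - 1)) := by
    rw [show ((starRingEnd ℂ) s - 1) = (starRingEnd ℂ) (s - 1) by simp, hn',
      cpow_real_conj (Nat.cast_nonneg n)]
  rw [h1, h2, chi_conj, ← map_mul, ← map_add,
    show (1 / 2 : ℂ) = (starRingEnd ℂ) (1 / 2) by rw [map_div₀, map_one, map_ofNat],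
    ← map_mul]
  simp only [map_add, map_mul, Complex.conj_conj]
  rw [show (starRingEnd ℂ) (1 / 2 : ℂ) = 1 / 2 by rw [map_div₀, map_one, map_ofNat]]

private lemma chi_mul_chi (s : ℂ) (hs : ∀ m : ℤ, s ≠ (m : ℂ)) :
    chi s * chi (1 - s) = 1 := by
  have hsin : Complex.sin (π * s) ≠ 0 := by
    rw [Complex.sin_ne_zero_iff]
    intro k hk
    have hπ : (π : ℂ) ≠ 0 := by
      simpa using Complex.ofReal_ne_zero.mpr Real.pi_ne_zero
    exact hs k (mul_left_cancel₀ hπ (by rw [hk]; ring))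
  have h2 : (2 : ℂ) ≠ 0 := by norm_num
  have hπ : (π : ℂ) ≠ 0 := by
    simpa using Complex.ofReal_ne_zero.mpr Real.pi_ne_zero
  have hGamma : Complex.Gamma (1 - s) * Complex.Gamma s = π / Complex.sin (π * s) := by
    rw [mul_comm]; exact Complex.Gamma_mul_Gamma_one_sub s
  have hpow2 : (2 : ℂ) ^ s * (2 : ℂ) ^ (1 - s) = 2 := by
    rw [← Complex.cpow_add _ _ h2]; simp
  have hpowπ : (π : ℂ) ^ (s - 1) * (π : ℂ) ^ (1 - s - 1) = ((π : ℂ))⁻¹ := by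
    rw [← Complex.cpow_add _ _ hπ, show s - 1 + (1 - s - 1) = (-1 : ℂ) by ring,
      Complex.cpow_neg_one]
  have hsin2 : Complex.sin (π * s / 2) * Complex.sin (π * (1 - s) / 2) =
      Complex.sin (π * s) / 2 := by
    have : (π : ℂ) * (1 - s) / 2 = π / 2 - π * s / 2 := by ring
    rw [this, Complex.sin_pi_div_two_sub,
      show (π : ℂ) * s = 2 * (π * s / 2) by ring, Complex.sin_two_mul]
    ring
  unfold chi
  have h1s : (1 : ℂ) - (1 - s) = s := by ring
  rw [h1s]
  calc (2:ℂ) ^ s * (π:ℂ) ^ (s - 1) * Complex.sin (π * s / 2) * Complex.Gamma (1 - s) *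
        ((2:ℂ) ^ (1 - s) * (π:ℂ) ^ (1 - s - 1) * Complex.sin (π * (1 - s) / 2) *
          Complex.Gamma s)
      = ((2:ℂ) ^ s * (2:ℂ) ^ (1 - s)) * ((π:ℂ) ^ (s - 1) * (π:ℂ) ^ (1 - s - 1)) *
        (Complex.sin (π * s / 2) * Complex.sin (π * (1 - s) / 2)) *
        (Complex.Gamma (1 - s) * Complex.Gamma s) := by ring
    _ = 2 * ((π:ℂ))⁻¹ * (Complex.sin (π * s) / 2) * ((π:ℂ) / Complex.sin (π * s)) := by
        rw [hpow2, hpowπ, hsin2, hGamma]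
    _ = 1 := by field_simp

private lemma zetaSection_one_sub (N : ℕ) (s : ℂ) (hs : ∀ m : ℤ, s ≠ (m : ℂ)) :
    zetaSection N (1 - s) = chi (1 - s) * zetaSection N s := by
  unfold zetaSection
  rw [Finset.mul_sum]
  refine Finset.sum_congr rfl fun n hn => ?_
  have hchi := chi_mul_chi s hs
  have h1 : -(1 - s) = s - 1 := by ring
  have h2 : (1 - s) - 1 = -s := by ring
  rw [h1, h2]
  have : chi (1 - s) * chi s = 1 := by rw [mul_comm] at hchi; exact hchi
  calc (1 / 2 : ℂ) * ((n : ℂ) ^ (s - 1) + chi (1 - s) * (n : ℂ) ^ (-s))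
      = (1 / 2 : ℂ) * ((chi (1 - s) * chi s) * (n : ℂ) ^ (s - 1)
          + chi (1 - s) * (n : ℂ) ^ (-s)) := by rw [this]; ring
    _ = chi (1 - s) * ((1 / 2 : ℂ) * ((n : ℂ) ^ (-s) + chi s * (n : ℂ) ^ (s - 1))) := by ring

/-- The zeros of `ζ_N` are symmetric with respect to the critical line: if a
non-integer `s` is a zero, then so is `1 - conj s`. -/
theorem zetaSection_zero_symm (N : ℕ) (hN : 1 ≤ N) (s : ℂ)
    (hs : ∀ m : ℤ, s ≠ (m : ℂ)) (hzero : zetaSection N s = 0) :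
    zetaSection N (1 - (starRingEnd ℂ) s) = 0 := by
  have hcs : ∀ m : ℤ, (starRingEnd ℂ) s ≠ (m : ℂ) := by
    intro m hm
    apply hs m
    have := congrArg (starRingEnd ℂ) hm
    simpa using this
  rw [zetaSection_one_sub N _ hcs, zetaSection_conj, hzero]
  simp
end

section
/- Let N ≥ 2 be a natural number and let a, b be real numbers with 0 < a ≤ b. Then there exists a real number σ₀ such that for every complex number s = σ + i·t with σ ≥ σ₀ and a ≤ t ≤ b, one has |∑_{n=2}^{N} (n^{−s} + χ(s)·n^{s−1})| < |1 + χ(s)|. -/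
open Real

lemma abs_cos_ge (z : ℂ) : Real.sinh z.im ≤ ‖Complex.cos z‖ := by
  have h : Complex.cos z = (Complex.exp (z*Complex.I) + Complex.exp (-z*Complex.I)) / 2 := rfl
  have h1 : ‖Complex.exp (z*Complex.I)‖ = Real.exp (-z.im) := by
    rw [Complex.norm_exp]; congr 1; simp [Complex.mul_re]
  have h2 : ‖Complex.exp (-z*Complex.I)‖ = Real.exp (z.im) := by
    rw [Complex.norm_exp]; congr 1; simp [Complex.mul_re]
  have key : Real.exp z.im - Real.exp (-z.im) ≤
      ‖Complex.exp (z*Complex.I) + Complex.exp (-z*Complex.I)‖ := by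
    have h3 := norm_sub_norm_le (Complex.exp (-z*Complex.I)) (-(Complex.exp (z*Complex.I)))
    simp only [norm_neg, sub_neg_eq_add] at h3
    rw [h1, h2] at h3
    rw [show Complex.exp (-z * Complex.I) + Complex.exp (z * Complex.I)
        = Complex.exp (z * Complex.I) + Complex.exp (-z * Complex.I) from by ring] at h3
    linarith
  rw [h, norm_div, show ‖(2:ℂ)‖ = 2 from by norm_num, Real.sinh_eq]
  linarith

lemma chi_mul (s : ℂ) (hs : s.im ≠ 0) :
    chi s * (2 * Complex.cos (π * s / 2) * Complex.Gamma s) = (2:ℂ)^s * (π:ℂ)^s := by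
  have hπ : (π:ℂ) ≠ 0 := by
    simp [Complex.ofReal_ne_zero, Real.pi_ne_zero]
  have hsin : Complex.sin (π * s) ≠ 0 := by
    intro h
    rw [Complex.sin_eq_zero_iff] at h
    obtain ⟨k, hk⟩ := h
    have := congrArg Complex.im hk
    simp [Complex.ofReal_mul] at this
    exact hs (by linarith)
  have hsin2 : Complex.sin (π * s / 2) ≠ 0 := by
    intro h
    apply hsin
    have h2 : (π : ℂ) * s = 2 * (π * s / 2) := by ring
    rw [h2, Complex.sin_two_mul, h]; ring
  have hgam : Complex.Gamma s ≠ 0 := by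
    apply Complex.Gamma_ne_zero
    intro m h
    have := congrArg Complex.im h
    simp at this
    exact hs this
  have key : Complex.Gamma s * Complex.Gamma (1 - s) = π / Complex.sin (π * s) :=
    Complex.Gamma_mul_Gamma_one_sub s
  have hdouble : Complex.sin (π * s) = 2 * Complex.sin (π * s / 2) * Complex.cos (π * s / 2) := by
    have h2 : (π : ℂ) * s = 2 * (π * s / 2) := by ring
    rw [h2, Complex.sin_two_mul]; ring
  have hpow : (π:ℂ) ^ (s - 1) = (π:ℂ) ^ s / (π:ℂ) := by
    rw [Complex.cpow_sub _ _ hπ, Complex.cpow_one]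
  have hG : Complex.Gamma (1 - s) = π / (Complex.sin (π * s) * Complex.Gamma s) := by
    field_simp at key ⊢
    linear_combination key
  have hcos : Complex.cos (π * s / 2) ≠ 0 := by
    intro h
    apply hsin
    rw [hdouble, h]; ring
  rw [chi, hG, hpow, hdouble]
  field_simp [hsin2, hcos, hgam]

lemma Gamma_add_nat (z : ℂ) (hz : z.im ≠ 0) (n : ℕ) :
    Complex.Gamma (z + n) = (∏ j ∈ Finset.range n, (z + j)) * Complex.Gamma z := by
  induction n with
  | zero => simp
  | succ n ih =>
    have hzn : z + n ≠ 0 := by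
      intro h
      have := congrArg Complex.im h
      simp at this
      exact hz this
    have h1 : (z + ((n:ℕ)+1 : ℕ)) = (z + n) + 1 := by push_cast; ring
    rw [h1, Complex.Gamma_add_one _ hzn, ih, Finset.prod_range_succ]; ring

lemma exists_gamma_min (a b : ℝ) (ha : 0 < a) (hab : a ≤ b) :
    ∃ c : ℝ, 0 < c ∧ ∀ z : ℂ, 1 ≤ z.re → z.re ≤ 2 → a ≤ z.im → z.im ≤ b →
      c ≤ ‖Complex.Gamma z‖ := by
  set K : Set ℂ := (fun p : ℝ × ℝ => (p.1 : ℂ) + p.2 * Complex.I) '' (Set.Icc 1 2 ×ˢ Set.Icc a b)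
  have hK : IsCompact K := by
    apply (isCompact_Icc.prod isCompact_Icc).image
    continuity
  have hmem : ∀ z ∈ K, (1 ≤ z.re ∧ z.re ≤ 2 ∧ a ≤ z.im ∧ z.im ≤ b) := by
    rintro z ⟨⟨x, y⟩, ⟨⟨hx1, hx2⟩, ⟨hy1, hy2⟩⟩, rfl⟩
    simp_all
  have hcont : ContinuousOn (fun z => ‖Complex.Gamma z‖) K := by
    intro z hz
    obtain ⟨h1, h2, h3, h4⟩ := hmem z hz
    have : DifferentiableAt ℂ Complex.Gamma z := by
      apply Complex.differentiableAt_Gamma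
      intro m h
      have := congrArg Complex.im h
      simp at this
      linarith
    exact (continuous_norm.continuousAt.comp this.continuousAt).continuousWithinAt
  have hne : K.Nonempty := by
    refine ⟨(1:ℝ) + (a:ℝ) * Complex.I, ⟨(1, a), ?_, rfl⟩⟩
    simp [hab, le_refl]
  obtain ⟨z₀, hz₀K, hz₀⟩ := hK.exists_isMinOn hne hcont
  refine ⟨‖Complex.Gamma z₀‖, ?_, ?_⟩
  · obtain ⟨h1, h2, h3, h4⟩ := hmem z₀ hz₀K
    have : Complex.Gamma z₀ ≠ 0 := by
      apply Complex.Gamma_ne_zero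
      intro m h
      have := congrArg Complex.im h
      simp at this
      linarith
    exact norm_pos_iff.mpr this
  · intro z h1 h2 h3 h4
    apply hz₀
    refine ⟨(z.re, z.im), ⟨⟨h1, h2⟩, ⟨h3, h4⟩⟩, ?_⟩
    simp [Complex.re_add_im]


set_option maxHeartbeats 2000000 in
/-- The Rouché-type inequality `|∑_{n=2}^N (n^{-s} + χ(s)·n^{s-1})| < |1 + χ(s)|`
for `s = σ + it` with `σ` large enough and `a ≤ t ≤ b`. -/
theorem rouche_inequality (N : ℕ) (hN : 2 ≤ N) (a b : ℝ) (ha : 0 < a) (hab : a ≤ b) :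
    ∃ σ₀ : ℝ, ∀ σ t : ℝ, σ₀ ≤ σ → a ≤ t → t ≤ b →
      ‖∑ n ∈ Finset.Icc 2 N,
          ((n : ℂ) ^ (-((σ : ℂ) + Complex.I * t)) +
            chi ((σ : ℂ) + Complex.I * t) * (n : ℂ) ^ ((σ : ℂ) + Complex.I * t - 1))‖ <
        ‖1 + chi ((σ : ℂ) + Complex.I * t)‖ := by
  obtain ⟨c, hc, hcmin⟩ := exists_gamma_min a b ha hab
  have hN0 : (0:ℝ) < N := by positivity
  have hN2 : (2:ℝ) ≤ N := by exact_mod_cast hN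
  set Kr : ℝ := 2 * π * N with hKr
  have hK1 : (1:ℝ) ≤ Kr := by nlinarith [Real.pi_gt_three]
  have hsinh : 0 < Real.sinh (π * a / 2) := Real.sinh_pos_iff.mpr (by positivity)
  set S : ℝ := 2 * Real.sinh (π * a / 2) * c with hS
  have hS0 : 0 < S := by positivity
  set ε : ℝ := S / (4 * Kr^2) with hε_def
  have hε : 0 < ε := by positivity
  obtain ⟨n₀, hn₀⟩ := Filter.eventually_atTop.mp
    ((FloorSemiring.tendsto_pow_div_factorial_atTop Kr).eventually_lt_const hε)
  refine ⟨max (4 * N) ((n₀:ℝ) + 2), ?_⟩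
  intro σ t hσ hta htb
  set s : ℂ := (σ:ℂ) + Complex.I * t with hs_def
  have hsre : s.re = σ := by simp [hs_def]
  have hsim : s.im = t := by simp [hs_def]
  have ht0 : 0 < t := lt_of_lt_of_le ha hta
  have hσ4N : 4 * (N:ℝ) ≤ σ := le_trans (by push_cast; exact le_max_left _ _) hσ
  have hσn₀ : (n₀:ℝ) + 2 ≤ σ := le_trans (le_max_right _ _) hσ
  have hσ2 : (2:ℝ) ≤ σ := by linarith
  have hσ0 : (0:ℝ) < σ := by linarith
  -- floor decomposition
  have hfl0 : (0:ℤ) ≤ ⌊σ⌋ := Int.floor_nonneg.mpr (le_of_lt hσ0)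
  set M : ℕ := ⌊σ⌋.toNat with hM_def
  have hMcast : (M:ℝ) = (⌊σ⌋:ℝ) := by
    rw [hM_def]; exact_mod_cast Int.toNat_of_nonneg hfl0
  have hMle : (M:ℝ) ≤ σ := by rw [hMcast]; exact Int.floor_le σ
  have hMgt : σ < (M:ℝ) + 1 := by rw [hMcast]; exact Int.lt_floor_add_one σ
  have hM2 : 2 ≤ M := by
    have h1 : (1:ℝ) < (M:ℝ) := by linarith
    exact_mod_cast Nat.one_lt_cast.mp h1
  set q : ℕ := M - 1 with hq_def
  have hqM : q + 1 = M := by omega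
  have hqcast : (q:ℝ) + 1 = (M:ℝ) := by exact_mod_cast congrArg (Nat.cast (R := ℝ)) hqM
  have hσq1 : 1 ≤ σ - q := by linarith
  have hσq2 : σ - q ≤ 2 := by linarith
  have hσle : σ ≤ (q:ℝ) + 2 := by linarith
  have hq_ge : n₀ ≤ q := by
    have : (n₀:ℝ) < (q:ℝ) + 1 := by linarith
    have := Nat.cast_lt.mp (by exact_mod_cast this : (n₀:ℝ) < ((q+1 : ℕ):ℝ))
    omega
  -- Gamma lower bound
  set z : ℂ := s - q with hz_def
  have hzre : z.re = σ - q := by simp [hz_def, hsre]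
  have hzim : z.im = t := by simp [hz_def, hsim]
  have hztne : z.im ≠ 0 := by rw [hzim]; exact ne_of_gt ht0
  have hzq : z + (q:ℂ) = s := by rw [hz_def]; ring
  have hGs : Complex.Gamma s = (∏ j ∈ Finset.range q, (z + j)) * Complex.Gamma z := by
    have h := Gamma_add_nat z hztne q
    rwa [hzq] at h
  have hfacprod : (q.factorial : ℝ) ≤ ∏ j ∈ Finset.range q, ‖z + j‖ := by
    rw [← Finset.prod_range_add_one_eq_factorial]
    push_cast
    apply Finset.prod_le_prod
    · intro j _; positivity
    · intro j _
      have h1 : (j:ℝ) + 1 ≤ (z + j).re := by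
        simp [Complex.add_re, hzre]
        linarith
      calc (j:ℝ) + 1 ≤ (z + j).re := h1
        _ ≤ |(z + j).re| := le_abs_self _
        _ ≤ ‖z + j‖ := Complex.abs_re_le_norm _
  have hΓz : c ≤ ‖Complex.Gamma z‖ := by
    apply hcmin z (by rw [hzre]; exact hσq1) (by rw [hzre]; exact hσq2)
      (by rw [hzim]; exact hta) (by rw [hzim]; exact htb)
  have habsGs : (q.factorial : ℝ) * c ≤ ‖Complex.Gamma s‖ := by
    rw [hGs, norm_mul, Complex.norm_prod]
    exact mul_le_mul hfacprod hΓz (le_of_lt hc) (Finset.prod_nonneg fun j _ => by positivity)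
  -- chi bound
  have hchi_id := chi_mul s (by rw [hsim]; exact ne_of_gt ht0)
  have habs := congrArg norm hchi_id
  simp only [norm_mul] at habs
  rw [show (2:ℂ) = ((2:ℝ):ℂ) from by norm_num,
    Complex.norm_cpow_eq_rpow_re_of_pos two_pos,
    Complex.norm_cpow_eq_rpow_re_of_pos Real.pi_pos, hsre] at habs
  rw [show ‖((2:ℝ):ℂ)‖ = 2 from by norm_num] at habs
  have hcos_lb : Real.sinh (π * a / 2) ≤ ‖Complex.cos (π * s / 2)‖ := by
    have h1 := abs_cos_ge ((π:ℂ) * s / 2)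
    have h2 : ((π:ℂ) * s / 2).im = π * t / 2 := by
      rw [show (π:ℂ) * s / 2 = ((π/2:ℝ):ℂ) * s from by push_cast; ring]
      simp [Complex.mul_im, hsim]
      ring
    rw [h2] at h1
    refine le_trans ?_ h1
    apply Real.sinh_le_sinh.mpr
    have hππ := Real.pi_pos
    gcongr
  have hΓs_pos : (0:ℝ) < ‖Complex.Gamma s‖ := by
    have : (0:ℝ) < (q.factorial : ℝ) * c := by positivity
    linarith
  have hfacpos : (0:ℝ) < (q.factorial : ℝ) := by positivity
  have hchiB : ‖chi s‖ * (S * (q.factorial : ℝ)) ≤ (2:ℝ)^σ * π^σ := by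
    rw [← habs]
    apply mul_le_mul_of_nonneg_left _ (norm_nonneg _)
    calc S * (q.factorial : ℝ) = 2 * Real.sinh (π * a / 2) * ((q.factorial : ℝ) * c) := by rw [hS]; ring
      _ ≤ 2 * ‖Complex.cos (π * s / 2)‖ * ‖Complex.Gamma s‖ := by
          apply mul_le_mul (by linarith) habsGs (by positivity) (by positivity)
  -- the key smallness
  have hNσ : (0:ℝ) ≤ (N:ℝ)^σ := Real.rpow_nonneg (le_of_lt hN0) σ
  have hbase : (2:ℝ)^σ * π^σ * (N:ℝ)^σ = Kr^σ := by
    rw [hKr, Real.mul_rpow (by positivity) (le_of_lt hN0),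
      Real.mul_rpow (by norm_num) (le_of_lt Real.pi_pos)]
  have hX : ‖chi s‖ * (N:ℝ)^σ < 1/4 := by
    have e1 : ‖chi s‖ * (N:ℝ)^σ * (S * (q.factorial : ℝ)) ≤ Kr^σ := by
      rw [← hbase]
      calc ‖chi s‖ * (N:ℝ)^σ * (S * (q.factorial : ℝ))
          = ‖chi s‖ * (S * (q.factorial : ℝ)) * (N:ℝ)^σ := by ring
        _ ≤ (2:ℝ)^σ * π^σ * (N:ℝ)^σ := mul_le_mul_of_nonneg_right hchiB hNσ
    have e2 : Kr^σ ≤ Kr^((q+2 : ℕ):ℝ) := by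
      apply Real.rpow_le_rpow_of_exponent_le hK1
      push_cast; linarith
    have e3 : Kr^(((q+2 : ℕ)):ℝ) = Kr^(q+2 : ℕ) := Real.rpow_natCast _ _
    have e4 : Kr^(q+2 : ℕ) = Kr^q * Kr^2 := by rw [pow_add]
    have e5 : Kr^q / (q.factorial : ℝ) < ε := hn₀ q hq_ge
    have hKr0 : (0:ℝ) < Kr := by linarith
    have e6 : Kr^q * Kr^2 < ε * (q.factorial : ℝ) * Kr^2 := by
      have h9 : Kr^q < ε * (q.factorial : ℝ) := (div_lt_iff₀ hfacpos).mp e5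
      exact mul_lt_mul_of_pos_right h9 (pow_pos hKr0 2)
    have e7 : ε * Kr^2 = S / 4 := by
      rw [hε_def]; field_simp
    have : ‖chi s‖ * (N:ℝ)^σ * (S * (q.factorial : ℝ)) < S / 4 * (q.factorial : ℝ) := by
      calc ‖chi s‖ * (N:ℝ)^σ * (S * (q.factorial : ℝ)) ≤ Kr^σ := e1
        _ ≤ Kr^q * Kr^2 := by rw [← e4, ← e3]; exact e2
        _ < ε * (q.factorial : ℝ) * Kr^2 := e6
        _ = S / 4 * (q.factorial : ℝ) := by rw [show ε * (q.factorial : ℝ) * Kr^2 = ε * Kr^2 * (q.factorial : ℝ) from by ring, e7]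
    have hpos : (0:ℝ) < S * (q.factorial : ℝ) := by positivity
    have h8 : ‖chi s‖ * (N:ℝ)^σ * (S * (q.factorial : ℝ)) <
        1/4 * (S * (q.factorial : ℝ)) := by
      calc ‖chi s‖ * (N:ℝ)^σ * (S * (q.factorial : ℝ))
          < S / 4 * (q.factorial : ℝ) := this
        _ = 1/4 * (S * (q.factorial : ℝ)) := by ring
    exact lt_of_mul_lt_mul_right h8 hpos.le
  have hNσ1 : (1:ℝ) ≤ (N:ℝ)^σ := by
    calc (1:ℝ) = (1:ℝ)^σ := (Real.one_rpow σ).symm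
      _ ≤ (N:ℝ)^σ := Real.rpow_le_rpow (by norm_num) (by linarith) (le_of_lt hσ0)
  have hchi_lt : ‖chi s‖ < 1/4 := by
    calc ‖chi s‖ ≤ ‖chi s‖ * (N:ℝ)^σ :=
        le_mul_of_one_le_right (norm_nonneg _) hNσ1
      _ < 1/4 := hX
  -- the 2^{-σ} part
  have h2σpos : (0:ℝ) < (2:ℝ)^σ := Real.rpow_pos_of_pos two_pos σ
  have h2σbig : 2 * (N:ℝ) < (2:ℝ)^σ := by
    have h1 : (2:ℝ)^σ = Real.exp (Real.log 2 * σ) := Real.rpow_def_of_pos two_pos σ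
    have h2 : Real.log 2 * σ + 1 ≤ Real.exp (Real.log 2 * σ) := Real.add_one_le_exp _
    have h3 : (0.6931471803:ℝ) < Real.log 2 := Real.log_two_gt_d9
    have h4 : (0.6931471803:ℝ) * σ ≤ Real.log 2 * σ :=
      mul_le_mul_of_nonneg_right (le_of_lt h3) (le_of_lt hσ0)
    rw [h1]
    linarith
  have h2part : (N:ℝ) * (2:ℝ)^(-σ) < 1/2 := by
    rw [Real.rpow_neg (by norm_num)]
    rw [show (N:ℝ) * ((2:ℝ)^σ)⁻¹ = (N:ℝ) / (2:ℝ)^σ from by ring, div_lt_iff₀ h2σpos]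
    linarith
  -- term bounds
  have hterm : ∀ k ∈ Finset.Icc 2 N,
      ‖(k:ℂ)^(-s) + chi s * (k:ℂ)^(s-1)‖ ≤
        (2:ℝ)^(-σ) + ‖chi s‖ * (N:ℝ)^(σ-1) := by
    intro k hk
    obtain ⟨hk2, hkN⟩ := Finset.mem_Icc.mp hk
    have hk2r : (2:ℝ) ≤ (k:ℝ) := by exact_mod_cast hk2
    have hkNr : (k:ℝ) ≤ (N:ℝ) := by exact_mod_cast hkN
    have hk0 : (0:ℝ) < (k:ℝ) := by linarith
    have e1 : ‖(k:ℂ)^(-s)‖ = (k:ℝ)^(-σ) := by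
      rw [show ((k:ℕ):ℂ) = (((k:ℝ)):ℂ) from by push_cast; rfl,
        Complex.norm_cpow_eq_rpow_re_of_pos hk0]
      simp [hsre]
    have e2 : ‖(k:ℂ)^(s-1)‖ = (k:ℝ)^(σ-1) := by
      rw [show ((k:ℕ):ℂ) = (((k:ℝ)):ℂ) from by push_cast; rfl,
        Complex.norm_cpow_eq_rpow_re_of_pos hk0]
      simp [hsre]
    have b1 : (k:ℝ)^(-σ) ≤ (2:ℝ)^(-σ) := by
      rw [Real.rpow_neg (le_of_lt hk0), Real.rpow_neg (by norm_num)]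
      apply inv_anti₀ h2σpos
      exact Real.rpow_le_rpow (by norm_num) hk2r (le_of_lt hσ0)
    have b2 : (k:ℝ)^(σ-1) ≤ (N:ℝ)^(σ-1) := by
      exact Real.rpow_le_rpow (le_of_lt hk0) hkNr (by linarith)
    calc ‖(k:ℂ)^(-s) + chi s * (k:ℂ)^(s-1)‖
        ≤ ‖(k:ℂ)^(-s)‖ + ‖chi s * (k:ℂ)^(s-1)‖ :=
          norm_add_le _ _
      _ = (k:ℝ)^(-σ) + ‖chi s‖ * (k:ℝ)^(σ-1) := by rw [e1, norm_mul, e2]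
      _ ≤ (2:ℝ)^(-σ) + ‖chi s‖ * (N:ℝ)^(σ-1) := by
          have := mul_le_mul_of_nonneg_left b2 (norm_nonneg (chi s))
          linarith
  have hsum : ‖∑ k ∈ Finset.Icc 2 N, ((k:ℂ)^(-s) + chi s * (k:ℂ)^(s-1))‖ ≤
      (N:ℝ) * ((2:ℝ)^(-σ) + ‖chi s‖ * (N:ℝ)^(σ-1)) := by
    calc ‖∑ k ∈ Finset.Icc 2 N, ((k:ℂ)^(-s) + chi s * (k:ℂ)^(s-1))‖
        ≤ ∑ k ∈ Finset.Icc 2 N, ‖(k:ℂ)^(-s) + chi s * (k:ℂ)^(s-1)‖ :=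
          norm_sum_le _ _
      _ ≤ (Finset.Icc 2 N).card • ((2:ℝ)^(-σ) + ‖chi s‖ * (N:ℝ)^(σ-1)) :=
          Finset.sum_le_card_nsmul _ _ _ hterm
      _ = ((Finset.Icc 2 N).card : ℝ) * ((2:ℝ)^(-σ) + ‖chi s‖ * (N:ℝ)^(σ-1)) := by
          rw [nsmul_eq_mul]
      _ ≤ (N:ℝ) * ((2:ℝ)^(-σ) + ‖chi s‖ * (N:ℝ)^(σ-1)) := by
          apply mul_le_mul_of_nonneg_right _ (by positivity)
          rw [Nat.card_Icc, show N + 1 - 2 = N - 1 from by omega]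
          exact_mod_cast Nat.sub_le N 1
  have hNmul : (N:ℝ) * ((N:ℝ)^(σ-1)) = (N:ℝ)^σ := by
    nth_rewrite 1 [← Real.rpow_one (N:ℝ)]
    rw [← Real.rpow_add hN0]
    congr 1
    ring
  have hLHS : ‖∑ k ∈ Finset.Icc 2 N, ((k:ℂ)^(-s) + chi s * (k:ℂ)^(s-1))‖ <
      3/4 := by
    have expand : (N:ℝ) * ((2:ℝ)^(-σ) + ‖chi s‖ * (N:ℝ)^(σ-1)) =
        (N:ℝ) * (2:ℝ)^(-σ) + ‖chi s‖ * (N:ℝ)^σ := by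
      rw [mul_add, ← hNmul]; ring
    rw [expand] at hsum
    linarith
  have hRHS : (3:ℝ)/4 < ‖1 + chi s‖ := by
    have h1 : ‖(1 + chi s) - chi s‖ = 1 := by
      rw [add_sub_cancel_right]; exact norm_one
    have h2 : ‖(1 + chi s) - chi s‖ ≤ ‖1 + chi s‖ + ‖chi s‖ := by
      calc ‖(1 + chi s) - chi s‖ ≤
          ‖1 + chi s‖ + ‖-(chi s)‖ := by
            rw [sub_eq_add_neg]; exact norm_add_le _ _
        _ = ‖1 + chi s‖ + ‖chi s‖ := by rw [norm_neg]
    linarith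
  exact lt_trans hLHS hRHS
end
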